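/- Under the hypotheses of the previous setup (single resonance m·ω = n, gcd(m₁,m₂,n)=1, k=gcd(m₁,m₂)), the closure of any orbit of the translation x ↦ x+ω on T² is a disjoint union of exactly k circles (cosets of a one-dimensional subtorus), and the translation permutes these k circles cyclically. -/

import Mathlib

open AddCircle

lemma aux_dense_zsmul (α : ℝ) (hα : Irrational α) :
    Dense (Set.range fun j : ℤ => j • (α : AddCircle (1:ℝ))) := by
  have hS : Dense ((AddSubgroup.zmultiples α ⊔ AddSubgroup.zmultiples (1:ℝ) : AddSubgroup ℝ) : Set ℝ) := by
    rcases AddSubgroup.dense_or_cyclic (AddSubgroup.zmultiples α ⊔ AddSubgroup.zmultiples (1:ℝ)) with h | ⟨a, ha⟩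
    · exact h
    · exfalso
      have hα' : α ∈ AddSubgroup.closure ({a} : Set ℝ) := by
        rw [← ha]; exact AddSubgroup.mem_sup_left (AddSubgroup.mem_zmultiples α)
      have h1 : (1:ℝ) ∈ AddSubgroup.closure ({a} : Set ℝ) := by
        rw [← ha]; exact AddSubgroup.mem_sup_right (AddSubgroup.mem_zmultiples 1)
      rw [AddSubgroup.mem_closure_singleton] at hα' h1
      obtain ⟨p, hp⟩ := hα'
      obtain ⟨q, hq⟩ := h1
      have hq0 : (q:ℝ) ≠ 0 := by
        intro h
        rw [zsmul_eq_mul, h, zero_mul] at hq; exact one_ne_zero hq.symm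
      refine hα ⟨(p : ℚ)/(q : ℚ), ?_⟩
      push_cast
      rw [zsmul_eq_mul] at hp hq
      field_simp
      linear_combination (q:ℝ) * hp - (p:ℝ) * hq
  have hcont : Continuous ((↑) : ℝ → AddCircle (1:ℝ)) := continuous_quotient_mk'
  have hsurj : Function.Surjective ((↑) : ℝ → AddCircle (1:ℝ)) := Quotient.exists_rep
  have := (DenseRange.dense_image (f := ((↑) : ℝ → AddCircle (1:ℝ)))
    (hsurj.denseRange) hcont hS)
  refine Dense.mono ?_ this
  rintro _ ⟨r, hr, rfl⟩
  rw [SetLike.mem_coe, AddSubgroup.mem_sup] at hr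
  obtain ⟨y, hy, z, hz, rfl⟩ := hr
  obtain ⟨p, rfl⟩ := AddSubgroup.mem_zmultiples_iff.mp hy
  obtain ⟨q, rfl⟩ := AddSubgroup.mem_zmultiples_iff.mp hz
  refine ⟨p, ?_⟩
  have : ((q • (1:ℝ) : ℝ) : AddCircle (1:ℝ)) = 0 := by
    rw [coe_eq_zero_iff]; exact ⟨q, rfl⟩
  rw [coe_add, coe_zsmul, this, add_zero]

lemma aux_dense_nsmul (α : ℝ) (hα : Irrational α) :
    Dense (Set.range fun j : ℕ => j • (α : AddCircle (1:ℝ))) := by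
  haveI : Fact ((0:ℝ) < 1) := ⟨one_pos⟩
  set A : AddCircle (1:ℝ) := (α : AddCircle (1:ℝ)) with hA
  set C : Set (AddCircle (1:ℝ)) := closure (Set.range fun j : ℕ => j • A) with hC
  have hrange : (Set.range fun j : ℕ => j • A) = ((AddSubmonoid.closure {A} : AddSubmonoid (AddCircle (1:ℝ))) : Set (AddCircle (1:ℝ))) := by
    ext z
    simp [AddSubmonoid.mem_closure_singleton, eq_comm]
  set M := (AddSubmonoid.closure ({A} : Set (AddCircle (1:ℝ)))).topologicalClosure with hM
  have hMC : (M : Set (AddCircle (1:ℝ))) = C := by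
    rw [hC, hrange]; rfl
  have hCmon : ∀ x ∈ C, ∀ y ∈ C, x + y ∈ C := by
    intro x hx y hy
    have hxM : x ∈ M := by rw [← SetLike.mem_coe, hMC]; exact hx
    have hyM : y ∈ M := by rw [← SetLike.mem_coe, hMC]; exact hy
    have := M.add_mem hxM hyM
    rwa [← SetLike.mem_coe, hMC] at this
  have hnegA : -A ∈ C := by
    rw [Metric.mem_closure_iff]
    intro ε hε
    obtain ⟨L, -, φ, hφ, hconv⟩ := IsCompact.tendsto_subseq (x := fun j : ℕ => (j+1) • A)
      (isCompact_univ) (fun n => Set.mem_univ _)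
    rw [Metric.tendsto_atTop] at hconv
    obtain ⟨N, hN⟩ := hconv (ε/2) (by linarith)
    have h1 := hN N le_rfl
    have h2 := hN (N+1) (by omega)
    have hlt : φ N < φ (N+1) := hφ (by omega)
    set d : ℕ := φ (N+1) - φ N with hd
    have hd1 : 1 ≤ d := by omega
    have hsub : (φ (N+1) + 1) • A - (φ N + 1) • A = d • A := by
      have h := sub_nsmul A (show φ N + 1 ≤ φ (N+1) + 1 by omega)
      have e1 : φ (N+1) + 1 - (φ N + 1) = d := by omega
      rw [e1] at h
      rw [sub_eq_add_neg, ← h]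
    have hdist : ‖d • A‖ < ε := by
      have : ‖d • A‖ = dist ((φ (N+1) + 1) • A) ((φ N + 1) • A) := by
        rw [dist_eq_norm, hsub]
      rw [this]
      calc dist ((φ (N+1) + 1) • A) ((φ N + 1) • A)
          ≤ dist ((φ (N+1) + 1) • A) L + dist ((φ N + 1) • A) L := dist_triangle_right _ _ _
        _ < ε/2 + ε/2 := by
            simp only [Function.comp] at h1 h2
            exact add_lt_add h2 h1
        _ = ε := by ring
    refine ⟨(d-1 : ℕ) • A, ⟨d-1, rfl⟩, ?_⟩
    have hstep : (d-1:ℕ) • A - -A = d • A := by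
      rw [sub_neg_eq_add, ← succ_nsmul]
      congr 1
      omega
    rw [dist_comm, dist_eq_norm, hstep]
    exact hdist
  have hz : ∀ j : ℤ, j • A ∈ C := by
    have hnsmulC : ∀ (m : ℕ) (y : AddCircle (1:ℝ)), y ∈ C → m • y ∈ C := by
      intro m y hy
      induction m with
      | zero => rw [zero_nsmul]; exact subset_closure ⟨0, by simp⟩
      | succ m ih => rw [succ_nsmul]; exact hCmon _ ih _ hy
    intro j
    rcases le_or_gt 0 j with hj | hj
    · have : j • A = (j.toNat : ℕ) • A := by
        rw [← natCast_zsmul]; congr 1; omega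
      rw [this]
      exact subset_closure ⟨j.toNat, rfl⟩
    · have : j • A = ((-j).toNat : ℕ) • (-A) := by
        rw [← natCast_zsmul, smul_neg, ← neg_zsmul]
        congr 1
        omega
      rw [this]
      exact hnsmulC _ _ hnegA
  have hsub2 : (Set.range fun j : ℤ => j • A) ⊆ C := by rintro _ ⟨j, rfl⟩; exact hz j
  have hdense := aux_dense_zsmul α hα
  rw [dense_iff_closure_eq] at hdense ⊢
  rw [← hC]
  have h3 : closure (Set.range fun j : ℤ => j • A) ⊆ C := closure_minimal hsub2 isClosed_closure
  rw [hdense] at h3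
  exact Set.eq_univ_of_univ_subset h3

noncomputable def auxH (a b : ℤ) : AddSubgroup (AddCircle (1:ℝ) × AddCircle (1:ℝ)) where
  carrier := {z | a • z.1 + b • z.2 = 0}
  add_mem' := by
    intro p q hp hq
    simp only [Set.mem_setOf_eq, Prod.fst_add, Prod.snd_add, smul_add] at *
    rw [add_add_add_comm, hp, hq, add_zero]
  zero_mem' := by simp
  neg_mem' := by
    intro p hp
    simp only [Set.mem_setOf_eq, Prod.fst_neg, Prod.snd_neg, smul_neg] at *
    rw [← neg_add, hp, neg_zero]

lemma mem_auxH (a b : ℤ) (z : AddCircle (1:ℝ) × AddCircle (1:ℝ)) :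
    z ∈ auxH a b ↔ a • z.1 + b • z.2 = 0 := Iff.rfl

lemma auxH_closed (a b : ℤ) : IsClosed ((auxH a b : Set (AddCircle (1:ℝ) × AddCircle (1:ℝ)))) := by
  have : (auxH a b : Set (AddCircle (1:ℝ) × AddCircle (1:ℝ)))
      = (fun z : AddCircle (1:ℝ) × AddCircle (1:ℝ) => a • z.1 + b • z.2) ⁻¹' {0} := by
    ext z; simp [mem_auxH]
  rw [this]
  exact IsClosed.preimage
    (Continuous.add ((continuous_zsmul a).comp continuous_fst)
      ((continuous_zsmul b).comp continuous_snd)) isClosed_singleton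

lemma aux_key1 {a b u v : ℤ} (h : a*u + b*v = 1) (w : AddCircle (1:ℝ) × AddCircle (1:ℝ))
    (hw : a • w.1 + b • w.2 = 0) : (-b) • ((-v) • w.1 + u • w.2) = w.1 := by
  have h2 : u • (a • w.1 + b • w.2) = 0 := by rw [hw, smul_zero]
  have : (-b) • ((-v) • w.1 + u • w.2) = w.1 - u • (a • w.1 + b • w.2) := by
    match_scalars <;> first | ring1 | linear_combination h | linear_combination -h
  rw [this, h2, sub_zero]

lemma aux_key2 {a b u v : ℤ} (h : a*u + b*v = 1) (w : AddCircle (1:ℝ) × AddCircle (1:ℝ))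
    (hw : a • w.1 + b • w.2 = 0) : a • ((-v) • w.1 + u • w.2) = w.2 := by
  have h2 : v • (a • w.1 + b • w.2) = 0 := by rw [hw, smul_zero]
  have : a • ((-v) • w.1 + u • w.2) = w.2 - v • (a • w.1 + b • w.2) := by
    match_scalars <;> first | ring1 | linear_combination h | linear_combination -h
  rw [this, h2, sub_zero]

noncomputable def auxEquiv {a b u v : ℤ} (h : a*u + b*v = 1) :
    (auxH a b) ≃ AddCircle (1:ℝ) where
  toFun z := (-v) • (z : AddCircle (1:ℝ) × AddCircle (1:ℝ)).1
      + u • (z : AddCircle (1:ℝ) × AddCircle (1:ℝ)).2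
  invFun t := ⟨((-b) • t, a • t), by
    rw [mem_auxH, smul_smul, smul_smul, ← add_smul]
    have : a * -b + b * a = 0 := by ring
    rw [this, zero_smul]⟩
  left_inv z := by
    ext
    · exact aux_key1 h _ z.2
    · exact aux_key2 h _ z.2
  right_inv t := by
    show (-v) • ((-b) • t) + u • (a • t) = t
    rw [smul_smul, smul_smul, ← add_smul]
    have : -v * -b + u * a = 1 := by linear_combination h
    rw [this, one_smul]

noncomputable def auxE {a b u v : ℤ} (h : a*u + b*v = 1) :
    (auxH a b) ≃ₜ AddCircle (1:ℝ) where
  toEquiv := auxEquiv h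
  continuous_toFun := Continuous.add
    ((continuous_zsmul _).comp (continuous_fst.comp continuous_subtype_val))
    ((continuous_zsmul _).comp (continuous_snd.comp continuous_subtype_val))
  continuous_invFun := Continuous.subtype_mk
    (Continuous.prodMk (continuous_zsmul _) (continuous_zsmul _)) _

lemma auxE_add {a b u v : ℤ} (h : a*u + b*v = 1) (p q : auxH a b) :
    auxE h (p + q) = auxE h p + auxE h q := by
  show (-v) • ((p:AddCircle (1:ℝ) × AddCircle (1:ℝ)) + q).1
      + u • ((p:AddCircle (1:ℝ) × AddCircle (1:ℝ)) + q).2 = _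
  simp only [Prod.fst_add, Prod.snd_add, smul_add]
  rw [add_add_add_comm]
  rfl

lemma coe_zsmul_real (c : ℤ) (r : ℝ) :
    c • ((r : ℝ) : AddCircle (1:ℝ)) = (((c:ℝ) * r : ℝ) : AddCircle (1:ℝ)) := by
  rw [← AddCircle.coe_zsmul, zsmul_eq_mul]

lemma coe_nsmul_real (c : ℕ) (r : ℝ) :
    c • ((r : ℝ) : AddCircle (1:ℝ)) = (((c:ℝ) * r : ℝ) : AddCircle (1:ℝ)) := by
  rw [← AddCircle.coe_nsmul, nsmul_eq_mul]

lemma coe_eq_zero_iff' (r : ℝ) : ((r:ℝ) : AddCircle (1:ℝ)) = 0 ↔ ∃ m : ℤ, r = m := by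
  rw [AddCircle.coe_eq_zero_iff]; simp [zsmul_eq_mul, eq_comm]

lemma mem_auxH_coe (a b : ℤ) (r₁ r₂ : ℝ) :
    (((r₁:ℝ): AddCircle (1:ℝ)), ((r₂:ℝ): AddCircle (1:ℝ))) ∈ auxH a b
      ↔ ∃ m : ℤ, (a:ℝ)*r₁ + (b:ℝ)*r₂ = m := by
  rw [mem_auxH]
  show a • ((r₁:ℝ): AddCircle (1:ℝ)) + b • ((r₂:ℝ): AddCircle (1:ℝ)) = 0 ↔ _
  rw [coe_zsmul_real, coe_zsmul_real, ← AddCircle.coe_add, coe_eq_zero_iff']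
/-- Under a single resonance `m₁ω₁ + m₂ω₂ = n` (`gcd(m₁,m₂,n) = 1`, `k = gcd(m₁,m₂)`),
the closure of any orbit of the translation `x ↦ x + ω` on `T² = ℝ²/ℤ²` is a disjoint
union of exactly `k` circles (cosets of a closed one-dimensional subtorus), and the
translation permutes these `k` circles cyclically. -/
theorem single_resonance_orbit_closure (ω₁ ω₂ : ℝ) (m₁ m₂ n : ℤ) (k : ℕ)
    (hres : (m₁ : ℝ) * ω₁ + (m₂ : ℝ) * ω₂ = (n : ℝ))
    (hgcd : Int.gcd (Int.gcd m₁ m₂) n = 1)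
    (hk : k = Int.gcd m₁ m₂)
    (hrank : ∀ m₁' m₂' n' : ℤ, (m₁' : ℝ) * ω₁ + (m₂' : ℝ) * ω₂ = (n' : ℝ) →
      ∃ l : ℤ, m₁' = l * m₁ ∧ m₂' = l * m₂ ∧ n' = l * n)
    (x : AddCircle (1 : ℝ) × AddCircle (1 : ℝ)) :
    ∃ (H : AddSubgroup (AddCircle (1 : ℝ) × AddCircle (1 : ℝ)))
      (e : H ≃ₜ AddCircle (1 : ℝ))
      (c : ZMod k → AddCircle (1 : ℝ) × AddCircle (1 : ℝ)),
      IsClosed (H : Set (AddCircle (1 : ℝ) × AddCircle (1 : ℝ))) ∧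
      (∀ a b : H, e (a + b) = e a + e b) ∧
      (Pairwise fun i j : ZMod k =>
        Disjoint ((fun t => c i + t) '' (H : Set (AddCircle (1 : ℝ) × AddCircle (1 : ℝ))))
          ((fun t => c j + t) '' (H : Set (AddCircle (1 : ℝ) × AddCircle (1 : ℝ))))) ∧
      (closure (Set.range fun j : ℕ =>
          x + j • ((ω₁ : AddCircle (1 : ℝ)), (ω₂ : AddCircle (1 : ℝ)))) =
        ⋃ i : ZMod k,
          (fun t => c i + t) '' (H : Set (AddCircle (1 : ℝ) × AddCircle (1 : ℝ)))) ∧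
      (∀ i : ZMod k,
        c i + ((ω₁ : AddCircle (1 : ℝ)), (ω₂ : AddCircle (1 : ℝ))) - c (i + 1) ∈ H) := by
  haveI : Fact ((0:ℝ) < 1) := ⟨one_pos⟩
  -- k ≠ 0
  have k0 : k ≠ 0 := by
    intro h0
    rw [h0] at hk
    have := Int.gcd_eq_zero_iff.mp hk.symm
    rw [this.1, this.2] at hres
    have hn0 : (n:ℝ) = 0 := by rw [← hres]; push_cast; ring
    have hn0' : n = 0 := by exact_mod_cast hn0
    rw [← hk, hn0'] at hgcd
    norm_num [Int.gcd] at hgcd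
  haveI : NeZero k := ⟨k0⟩
  have hkR : (k:ℝ) ≠ 0 := Nat.cast_ne_zero.mpr k0
  -- factor out k
  obtain ⟨a, ha⟩ : (k:ℤ) ∣ m₁ := by rw [hk]; exact_mod_cast Int.gcd_dvd_left _ _
  obtain ⟨b, hb⟩ : (k:ℤ) ∣ m₂ := by rw [hk]; exact_mod_cast Int.gcd_dvd_right _ _
  subst ha hb
  have hab : Int.gcd a b = 1 := by
    rw [Int.gcd_mul_left] at hk
    rw [Int.natAbs_natCast] at hk
    have h1 : k * 1 = k * Int.gcd a b := by rw [mul_one]; exact hk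
    exact (Nat.eq_of_mul_eq_mul_left (Nat.pos_of_ne_zero k0) h1).symm
  have hkn : Int.gcd (k:ℤ) n = 1 := by
    rw [← hk] at hgcd; exact_mod_cast hgcd
  set u : ℤ := Int.gcdA a b with hu
  set v : ℤ := Int.gcdB a b with hv
  have huv : a * u + b * v = 1 := by
    have := Int.gcd_eq_gcd_ab a b
    rw [hab] at this
    exact_mod_cast this.symm
  -- cleared resonance
  have hω : ((a:ℝ)*ω₁ + (b:ℝ)*ω₂) * k = n := by
    push_cast at hres
    linear_combination hres
  -- β irrational
  set β : ℝ := -(v:ℝ)*ω₁ + (u:ℝ)*ω₂ with hβ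
  have hβirr : Irrational β := by
    rw [Irrational]
    intro hmem
    obtain ⟨q, hq⟩ := hmem
    have hd0 : (q.den : ℝ) ≠ 0 := Nat.cast_ne_zero.mpr q.den_nz
    have hβq : (-(v:ℝ)*ω₁ + (u:ℝ)*ω₂) * q.den = q.num := by
      rw [← hβ, ← hq, Rat.cast_def]
      field_simp
    have hrel : ((-v*q.den : ℤ) : ℝ) * ω₁ + ((u*q.den : ℤ) : ℝ) * ω₂ = ((q.num : ℤ) : ℝ) := by
      push_cast
      linear_combination hβq
    obtain ⟨l, h1, h2, h3⟩ := hrank _ _ _ hrel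
    have hd : (q.den : ℤ) = 0 := by linear_combination -(q.den:ℤ)*huv + a*h2 - b*h1
    exact q.den_nz (by exact_mod_cast hd)
  have hkβ : Irrational ((k:ℝ) * β) := by
    have := Irrational.intCast_mul hβirr (m := (k:ℤ)) (by exact_mod_cast k0)
    push_cast at this
    exact this
  set ωv : AddCircle (1:ℝ) × AddCircle (1:ℝ) := ((ω₁ : AddCircle (1:ℝ)), (ω₂ : AddCircle (1:ℝ)))
    with hωv
  -- membership criterion
  have hzsmul : ∀ j : ℤ, j • ωv = ((((j:ℝ)*ω₁ : ℝ) : AddCircle (1:ℝ)), (((j:ℝ)*ω₂ : ℝ) : AddCircle (1:ℝ))) := by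
    intro j
    show (j • (ω₁ : AddCircle (1:ℝ)), j • (ω₂ : AddCircle (1:ℝ))) = _
    rw [coe_zsmul_real, coe_zsmul_real]
  have hmemH : ∀ j : ℤ, j • ωv ∈ auxH a b ↔ (k:ℤ) ∣ j := by
    intro j
    rw [hzsmul, mem_auxH_coe]
    constructor
    · rintro ⟨m, hm⟩
      have : ((j*n : ℤ):ℝ) = ((m*k : ℤ):ℝ) := by
        push_cast
        linear_combination (k:ℝ)*hm - (j:ℝ)*hω
      have h4 : j * n = m * k := by exact_mod_cast this
      have h5 : (k:ℤ) ∣ n * j := ⟨m, by linarith⟩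
      exact Int.dvd_of_dvd_mul_right_of_gcd_one h5 hkn
    · rintro ⟨j', rfl⟩
      refine ⟨j'*n, ?_⟩
      push_cast
      linear_combination (j':ℝ)*hω
  set O : Set (AddCircle (1:ℝ) × AddCircle (1:ℝ)) := Set.range fun j : ℕ => j • ωv with hO
  -- orbit is inside the kernel of the full character
  have hOK : closure O ⊆ (auxH ((k:ℤ)*a) ((k:ℤ)*b) : Set (AddCircle (1:ℝ) × AddCircle (1:ℝ))) := by
    refine closure_minimal ?_ (auxH_closed _ _)
    rintro _ ⟨j, rfl⟩
    show (j:ℕ) • ωv ∈ auxH ((k:ℤ)*a) ((k:ℤ)*b)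
    rw [← natCast_zsmul, hzsmul, mem_auxH_coe]
    refine ⟨j*n, ?_⟩
    push_cast
    linear_combination (j:ℝ)*hω
  -- kernel is contained in the union of cosets
  have hKU : (auxH ((k:ℤ)*a) ((k:ℤ)*b) : Set (AddCircle (1:ℝ) × AddCircle (1:ℝ)))
      ⊆ ⋃ i : ZMod k, (fun t => (i.val • ωv) + t) '' (auxH a b : Set (AddCircle (1:ℝ) × AddCircle (1:ℝ))) := by
    intro z hz
    rw [SetLike.mem_coe, mem_auxH] at hz
    set ζ : AddCircle (1:ℝ) := a • z.1 + b • z.2 with hζ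
    obtain ⟨t, ht⟩ : ∃ t : ℝ, ((t:ℝ) : AddCircle (1:ℝ)) = ζ := Quotient.exists_rep ζ
    have hkζ : ((((k:ℝ)*t : ℝ)) : AddCircle (1:ℝ)) = 0 := by
      have : (k:ℤ) • ζ = 0 := by
        rw [hζ, smul_add, smul_smul, smul_smul]
        exact hz
      rw [← ht, coe_zsmul_real] at this
      push_cast at this
      exact this
    obtain ⟨m, hm⟩ := (coe_eq_zero_iff' _).mp hkζ
    set w : ℤ := Int.gcdB (k:ℤ) n with hwdef
    have hw : (1:ℤ) = (k:ℤ) * Int.gcdA (k:ℤ) n + n * w := by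
      have := Int.gcd_eq_gcd_ab (k:ℤ) n
      rw [hkn] at this
      exact_mod_cast this
    set i : ZMod k := ((m*w : ℤ) : ZMod k) with hi
    have hc : (k:ℤ) ∣ (i.val:ℤ)*n - m := by
      rw [← ZMod.intCast_zmod_eq_zero_iff_dvd]
      push_cast
      rw [ZMod.natCast_val, ZMod.cast_id]
      have h2 : ((n:ℤ) : ZMod k)*((w:ℤ):ZMod k) = 1 := by
        have h3 := congrArg (fun z : ℤ => (z : ZMod k)) hw
        push_cast at h3
        rw [ZMod.natCast_self] at h3
        rw [zero_mul, zero_add] at h3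
        exact h3.symm
      rw [hi]
      push_cast
      linear_combination ((m:ZMod k))*h2
    obtain ⟨cc, hcc⟩ := hc
    rw [Set.mem_iUnion]
    refine ⟨i, z - i.val • ωv, ?_, by simp⟩
    rw [SetLike.mem_coe, mem_auxH]
    have hy : a • (i.val • ωv).1 + b • (i.val • ωv).2 = ζ := by
      rw [← natCast_zsmul ωv i.val, hzsmul]
      show a • ((((i.val:ℤ):ℝ)*ω₁ : ℝ) : AddCircle (1:ℝ)) + b • ((((i.val:ℤ):ℝ)*ω₂:ℝ) : AddCircle (1:ℝ)) = ζ
      rw [coe_zsmul_real, coe_zsmul_real, ← AddCircle.coe_add, ← ht]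
      have : ((a:ℝ) * (((i.val:ℤ):ℝ)*ω₁) + (b:ℝ)*(((i.val:ℤ):ℝ)*ω₂)) - t = ((cc : ℤ):ℝ) := by
        have hccR : ((i.val:ℤ):ℝ)*n - m = (k:ℝ)*cc := by exact_mod_cast congrArg (fun z : ℤ => (z:ℝ)) hcc
        apply mul_left_cancel₀ hkR
        linear_combination ((i.val:ℤ):ℝ)*hω - hm + hccR
      have h6 : ((a:ℝ) * (((i.val:ℤ):ℝ)*ω₁) + (b:ℝ)*(((i.val:ℤ):ℝ)*ω₂) : ℝ) = t + ((cc:ℤ):ℝ) := by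
        linarith [this]
      rw [h6, AddCircle.coe_add]
      have : (((cc:ℤ):ℝ) : AddCircle (1:ℝ)) = 0 := (coe_eq_zero_iff' _).mpr ⟨cc, rfl⟩
      rw [this, add_zero]
    show a • (z - i.val • ωv).1 + b • (z - i.val • ωv).2 = 0
    have e1 : (z - i.val • ωv).1 = z.1 - (i.val • ωv).1 := rfl
    have e2 : (z - i.val • ωv).2 = z.2 - (i.val • ωv).2 := rfl
    rw [e1, e2, smul_sub, smul_sub]
    have : a • z.1 - a • (i.val • ωv).1 + (b • z.2 - b • (i.val • ωv).2)
        = (a • z.1 + b • z.2) - (a • (i.val • ωv).1 + b • (i.val • ωv).2) := by abel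
    rw [this, hy, ← hζ, sub_self]
  -- closure O is stable under translation by ωv
  have hstep : ∀ z ∈ closure O, ωv + z ∈ closure O := by
    intro z hz
    have hcont : Continuous fun w : AddCircle (1:ℝ) × AddCircle (1:ℝ) => ωv + w :=
      continuous_const.add continuous_id
    have himg : (fun w => ωv + w) '' O ⊆ O := by
      rintro _ ⟨_, ⟨j, rfl⟩, rfl⟩
      exact ⟨j+1, by show (j+1) • ωv = ωv + j • ωv; rw [succ_nsmul, add_comm]⟩
    have h1 := image_closure_subset_closure_image (s := O) hcont
    exact closure_mono himg (h1 ⟨z, hz, rfl⟩)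
  -- H is inside closure O
  have hH0 : (auxH a b : Set (AddCircle (1:ℝ) × AddCircle (1:ℝ))) ⊆ closure O := by
    set γ : AddCircle (1:ℝ) := (((k:ℝ)*β : ℝ) : AddCircle (1:ℝ)) with hγ
    set g : AddCircle (1:ℝ) → AddCircle (1:ℝ) × AddCircle (1:ℝ) := fun t => ((-b) • t, a • t)
      with hg
    have hgc : Continuous g := Continuous.prodMk (continuous_zsmul _) (continuous_zsmul _)
    have hS : Set.range (fun s : ℕ => s • γ) ⊆ g ⁻¹' closure O := by
      rintro _ ⟨s, rfl⟩
      have h1 : ((k*s : ℕ):ℤ) • ωv ∈ auxH a b := (hmemH _).mpr ⟨s, by push_cast; ring⟩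
      have h1' : a • (((k*s:ℕ):ℤ) • ωv).1 + b • (((k*s:ℕ):ℤ) • ωv).2 = 0 :=
        (mem_auxH a b _).mp h1
      have h2 : (-v) • (((k*s:ℕ):ℤ) • ωv).1 + u • (((k*s:ℕ):ℤ) • ωv).2 = s • γ := by
        rw [hzsmul]
        show (-v) • (((((k*s:ℕ):ℤ):ℝ)*ω₁ : ℝ) : AddCircle (1:ℝ))
            + u • (((((k*s:ℕ):ℤ):ℝ)*ω₂ : ℝ) : AddCircle (1:ℝ)) = s • γ
        rw [coe_zsmul_real, coe_zsmul_real, ← AddCircle.coe_add, hγ, coe_nsmul_real]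
        congr 1
        push_cast
        ring
      have h3 : g (s • γ) = ((k*s:ℕ):ℤ) • ωv := by
        rw [← h2]
        exact Prod.ext (aux_key1 huv _ h1') (aux_key2 huv _ h1')
      show g (s • γ) ∈ closure O
      rw [h3, natCast_zsmul]
      exact subset_closure ⟨k*s, rfl⟩
    have hSuniv : (Set.univ : Set (AddCircle (1:ℝ))) ⊆ g ⁻¹' closure O := by
      rw [← (aux_dense_nsmul _ hkβ).closure_eq]
      exact closure_minimal hS (IsClosed.preimage hgc isClosed_closure)
    intro h hh
    rw [SetLike.mem_coe, mem_auxH] at hh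
    have hinv : g ((-v) • h.1 + u • h.2) = h :=
      Prod.ext (aux_key1 huv _ hh) (aux_key2 huv _ hh)
    have h5 := hSuniv (Set.mem_univ ((-v) • h.1 + u • h.2))
    rwa [Set.mem_preimage, hinv] at h5
  -- union of cosets is inside closure O
  have hU0 : (⋃ i : ZMod k, (fun t => (i.val • ωv) + t)
        '' (auxH a b : Set (AddCircle (1:ℝ) × AddCircle (1:ℝ)))) ⊆ closure O := by
    have hsm : ∀ s : ℕ, ∀ z ∈ closure O, s • ωv + z ∈ closure O := by
      intro s
      induction s with
      | zero => intro z hz; rw [zero_nsmul, zero_add]; exact hz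
      | succ s ih =>
          intro z hz
          rw [succ_nsmul, add_assoc]
          exact ih _ (hstep z hz)
    intro z hz
    rw [Set.mem_iUnion] at hz
    obtain ⟨i, w, hw, rfl⟩ := hz
    exact hsm i.val _ (hH0 hw)
  have hclosO : closure O = ⋃ i : ZMod k, (fun t => (i.val • ωv) + t)
      '' (auxH a b : Set (AddCircle (1:ℝ) × AddCircle (1:ℝ))) :=
    subset_antisymm (fun z hz => hKU (hOK hz)) hU0
  refine ⟨auxH a b, auxE huv, fun i => x + i.val • ωv, auxH_closed a b, auxE_add huv, ?_, ?_, ?_⟩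
  · -- disjointness
    intro i j hij
    rw [Set.disjoint_left]
    rintro z ⟨h₁, hh₁, hz₁⟩ ⟨h₂, hh₂, hz₂⟩
    refine hij ?_
    have hz₁' : x + i.val • ωv + h₁ = z := hz₁
    have hz₂' : x + j.val • ωv + h₂ = z := hz₂
    have h8 : i.val • ωv + h₁ = j.val • ωv + h₂ := by
      apply add_left_cancel (a := x)
      rw [← add_assoc, ← add_assoc]
      rw [hz₁', hz₂']
    have he : (i.val:ℤ) • ωv - (j.val:ℤ) • ωv = h₂ - h₁ := by
      rw [natCast_zsmul, natCast_zsmul]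
      exact sub_eq_sub_iff_add_eq_add.mpr (h8.trans (add_comm _ _))
    have hd : ((i.val:ℤ) - (j.val:ℤ)) • ωv ∈ auxH a b := by
      have h11 : ((i.val:ℤ) - (j.val:ℤ)) • ωv = (i.val:ℤ) • ωv - (j.val:ℤ) • ωv := by
        rw [sub_zsmul]
        try rw [← sub_eq_add_neg]
      rw [h11, he]
      exact sub_mem hh₂ hh₁
    have h9 := (ZMod.intCast_zmod_eq_zero_iff_dvd _ k).mpr ((hmemH _).mp hd)
    push_cast at h9
    rw [ZMod.natCast_val, ZMod.natCast_val, ZMod.cast_id, ZMod.cast_id] at h9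
    exact sub_eq_zero.mp h9
  · -- closure equality
    have h1 : (Set.range fun j : ℕ => x + j • ωv) = (fun w => x + w) '' O := by
      rw [hO, ← Set.range_comp]
      rfl
    have hcoe : ⇑(Homeomorph.addLeft x) = fun w : AddCircle (1:ℝ) × AddCircle (1:ℝ) => x + w :=
      rfl
    have h2 : closure ((fun w : AddCircle (1:ℝ) × AddCircle (1:ℝ) => x + w) '' O)
        = (fun w : AddCircle (1:ℝ) × AddCircle (1:ℝ) => x + w) '' closure O := by
      rw [← hcoe, (Homeomorph.addLeft x).image_closure]
    rw [h1, h2, hclosO, Set.image_iUnion]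
    refine Set.iUnion_congr fun i => ?_
    rw [Set.image_image]
    simp only [add_assoc]
  · -- cyclic permutation
    intro i
    have hkdvd : (k:ℤ) ∣ ((i.val:ℤ) + 1 - ((i+1).val:ℤ)) := by
      apply (ZMod.intCast_zmod_eq_zero_iff_dvd _ k).mp
      push_cast
      rw [ZMod.natCast_val, ZMod.natCast_val, ZMod.cast_id, ZMod.cast_id]
      ring
    show (x + i.val • ωv) + ωv - (x + (i+1).val • ωv) ∈ auxH a b
    have heq : (x + i.val • ωv) + ωv - (x + (i+1).val • ωv)
        = ((i.val:ℤ) + 1 - ((i+1).val:ℤ)) • ωv := by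
      rw [← natCast_zsmul ωv i.val, ← natCast_zsmul ωv (i+1).val, sub_zsmul, add_zsmul, one_zsmul]
      abel
    rw [heq]
    exact (hmemH _).mpr hkdvd
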